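/- arXiv:2501.13202 — 10 statements merged into one kernel-verified Lean document; each statement's English description precedes it below -/
import Mathlib

section
/- Let (X,d) be a distance space. For every f ∈ P_d there exists g ∈ T_d with g ⪯ f (i.e., every element of P_d dominates a minimal element). -/
open scoped ENNReal

section CoreDefs

variable {Y : Type*}

/-- A distance space: symmetric, nonnegative, vanishing on the diagonal. -/
def IsDistance (d : Y → Y → ℝ) : Prop :=
  (∀ x y, 0 ≤ d x y) ∧ (∀ x y, d x y = d y x) ∧ ∀ x, d x x = 0

/-- The set `P_d` of functions dominating the distance `d`. -/
def Pd (d : Y → Y → ℝ) : Set (Y → ℝ) :=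
  {f | ∀ x y, d x y ≤ f x + f y}

/-- The tight span `T_d`: pointwise-minimal elements of `P_d`. -/
def Td (d : Y → Y → ℝ) : Set (Y → ℝ) :=
  {f | f ∈ Pd d ∧ ∀ g ∈ Pd d, g ≤ f → g = f}

/-- The sup-distance `d∞(f,g) = sup_x |f x - g x|`, valued in `[0,∞]`. -/
noncomputable def dInfty (f g : Y → ℝ) : ℝ≥0∞ :=
  ⨆ y, edist (f y) (g y)

/-- `κ(x) = {f ∈ T_d : f x = 0}`. -/
def kappa (d : Y → Y → ℝ) (x : Y) : Set (Y → ℝ) :=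
  {f | f ∈ Td d ∧ f x = 0}

/-- A pseudometric: symmetric, nonnegative, vanishing on the diagonal,
satisfying the triangle inequality. -/
def IsPseudometric (ρ : Y → Y → ℝ) : Prop :=
  (∀ x y, 0 ≤ ρ x y) ∧ (∀ x y, ρ x y = ρ y x) ∧ (∀ x, ρ x x = 0) ∧
  ∀ x y z, ρ x z ≤ ρ x y + ρ y z

/-- `M(d)`: the set of pseudometrics dominating `d`. -/
def Md (d : Y → Y → ℝ) : Set (Y → Y → ℝ) :=
  {ρ | IsPseudometric ρ ∧ ∀ x y, d x y ≤ ρ x y}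

end CoreDefs

/-- Every element of `P_d` dominates a minimal element, i.e. an element of
the tight span `T_d`. -/
theorem statement0 {X : Type*} [Nonempty X] (d : X → X → ℝ)
    (hd : IsDistance d) (f : X → ℝ) (hf : f ∈ Pd d) :
    ∃ g ∈ Td d, g ≤ f := by
  obtain ⟨hnn, hsymm, hdiag⟩ := hd
  -- every element of Pd is nonnegative
  have hPnn : ∀ h ∈ Pd d, ∀ x, 0 ≤ h x := by
    intro h hh x
    have := hh x x
    rw [hdiag] at this
    linarith
  have key : ∀ c ⊆ Pd d, IsChain (· ≤ ·) (α := (X → ℝ)ᵒᵈ) c → ∀ y ∈ c,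
      ∃ ub ∈ Pd d, ∀ z ∈ c, ub ≤ z := by
    intro c hc hchain y hy
    haveI : Nonempty c := ⟨⟨y, hy⟩⟩
    set g : X → ℝ := fun x => ⨅ h : c, (h : X → ℝ) x with hg
    have hbdd : ∀ x, BddBelow (Set.range fun h : c => (h : X → ℝ) x) := by
      intro x
      exact ⟨0, by rintro _ ⟨h, rfl⟩; exact hPnn h (hc h.2) x⟩
    have hgle : ∀ z ∈ c, ∀ x, g x ≤ z x := by
      intro z hz x
      exact ciInf_le (hbdd x) ⟨z, hz⟩
    refine ⟨g, ?_, fun z hz => ?_⟩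
    · intro x y'
      by_contra hlt
      push_neg at hlt
      have h1 : g x < d x y' - g y' := by linarith
      obtain ⟨⟨h1f, hh1⟩, hlt1⟩ := exists_lt_of_ciInf_lt h1
      have h2 : g y' < d x y' - h1f x := by
        have := hgle h1f hh1 x
        linarith [hgle h1f hh1 x]
      obtain ⟨⟨h2f, hh2⟩, hlt2⟩ := exists_lt_of_ciInf_lt h2
      rcases hchain.total hh1 hh2 with h12 | h21
      · -- in dual order: h1f ≤ h2f means h2f ≤ h1f pointwise
        have : h2f ≤ h1f := h12
        have hP := hc hh2 x y'
        have := this x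
        linarith
      · have : h1f ≤ h2f := h21
        have hP := hc hh1 x y'
        have := this y'
        linarith
    · exact fun x => hgle z hz x
  obtain ⟨m, hfm, hm⟩ := zorn_le_nonempty₀ (α := (X → ℝ)ᵒᵈ) (Pd d) (fun c hc hch y hy => key c hc hch y hy) f hf
  refine ⟨m, ⟨hm.1, fun g hg hgm => ?_⟩, hfm⟩
  exact le_antisymm hgm (hm.2 hg hgm)
end

section
/- Let (X,d) be a distance space and f : X → ℝ. Then f ∈ T_d if and only if f(x) = sup{d(x,y) − f(y) : y ∈ X} for all x ∈ X. -/
open scoped ENNReal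

/-- `f ∈ T_d` iff `f x = sup {d x y - f y : y ∈ X}` for all `x`. -/
theorem statement1 {X : Type*} [Nonempty X] (d : X → X → ℝ)
    (hd : IsDistance d) (f : X → ℝ) :
    f ∈ Td d ↔ ∀ x : X, IsLUB {r : ℝ | ∃ y : X, r = d x y - f y} (f x) := by
  classical
  obtain ⟨hnn, hsym, hdiag⟩ := hd
  constructor
  · rintro ⟨hP, hmin⟩ x
    have hfx0 : 0 ≤ f x := by have := hP x x; rw [hdiag] at this; linarith
    constructor
    · rintro r ⟨y, rfl⟩
      have := hP x y; linarith
    · intro b hb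
      have hbx : -f x ≤ b := by
        have : -f x ∈ {r : ℝ | ∃ y : X, r = d x y - f y} :=
          ⟨x, by rw [hdiag]; ring⟩
        exact hb this
      set g : X → ℝ := fun z => if z = x then min (f x) (max b 0) else f z with hg
      have hgP : g ∈ Pd d := by
        intro u v
        have hufv : u ≠ x → d x v - f v ≤ max b 0 := fun _ => le_trans (hb ⟨v, rfl⟩) (le_max_left _ _)
        simp only [hg, Pd, Set.mem_setOf_eq]
        by_cases hu : u = x <;> by_cases hv : v = x <;> simp [hu, hv]
        · have hm0 : (0:ℝ) ≤ f x ⊓ (b ⊔ 0) := le_inf hfx0 le_sup_right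
          rw [hdiag]; linarith
        · have h1 : d x v - f v ≤ f x := by have := hP x v; linarith
          have h2 : d x v - f v ≤ b ⊔ 0 := le_trans (hb ⟨v, rfl⟩) le_sup_left
          have := le_inf h1 h2; linarith
        · have h1 : d u x - f u ≤ f x := by
            have := hP u x; rw [hsym u x] at this ⊢; linarith
          have h2 : d u x - f u ≤ b ⊔ 0 := by
            rw [hsym u x]; exact le_trans (hb ⟨u, rfl⟩) le_sup_left
          have := le_inf h1 h2; linarith
        · exact hP u v
      have hgle : g ≤ f := by
        intro z
        simp only [hg]
        split_ifs with h
        · subst h; exact min_le_left _ _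
        · exact le_refl _
      have := hmin g hgP hgle
      have hfxeq : f x = min (f x) (max b 0) := by
        conv_lhs => rw [← this]
        simp [hg]
      have hle : f x ≤ max b 0 := by rw [hfxeq]; exact min_le_right _ _
      rcases le_or_gt 0 b with h0 | h0
      · rwa [max_eq_left h0] at hle
      · rw [max_eq_right h0.le] at hle; linarith
  · intro h
    have hP : f ∈ Pd d := by
      intro x y
      have := (h x).1 ⟨y, rfl⟩
      linarith
    refine ⟨hP, fun g hg hgf => ?_⟩
    funext x
    have hub : g x ∈ upperBounds {r : ℝ | ∃ y : X, r = d x y - f y} := by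
      rintro r ⟨y, rfl⟩
      have h1 := hg x y
      have h2 := hgf y
      linarith
    have := (h x).2 hub
    exact le_antisymm (hgf x) this
end

section
/- Let (X,d) be a distance space. For all f,g ∈ T_d, d∞(f,g) = sup{d(x,y) − f(x) − g(y) : x,y ∈ X}, where both sides are taken as values in [0,+∞] and the equality holds also when both sides are +∞. -/
open scoped ENNReal

lemma td_tight {X : Type*} (d : X → X → ℝ) (hd : IsDistance d)
    (f : X → ℝ) (hf : f ∈ Td d)
    (x : X) (ε : ℝ) (hε : 0 < ε) : ∃ y, f x + f y ≤ d x y + ε := by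
  by_contra h
  push_neg at h
  have hx := h x
  rw [hd.2.2 x] at hx
  have hfx : 0 < f x := by linarith
  set δ := min ε (f x) with hδdef
  have hδ : 0 < δ := lt_min hε hfx
  classical
  set g' : X → ℝ := Function.update f x (f x - δ) with hg'
  have hg'P : g' ∈ Pd d := by
    intro a b
    by_cases ha : a = x <;> by_cases hb : b = x
    · rw [ha, hb, hg', Function.update_self, hd.2.2 x]
      have : δ ≤ f x := min_le_right _ _
      linarith
    · rw [ha, hg', Function.update_self, Function.update_of_ne hb]
      have h1 := h b
      have h2 : δ ≤ ε := min_le_left _ _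
      linarith
    · rw [hb, hg', Function.update_self, Function.update_of_ne ha]
      have h1 := h a
      have h2 : δ ≤ ε := min_le_left _ _
      have h3 : d a x = d x a := hd.2.1 a x
      linarith
    · rw [hg', Function.update_of_ne ha, Function.update_of_ne hb]
      exact hf.1 a b
  have hle : g' ≤ f := by
    intro a
    by_cases ha : a = x
    · rw [ha, hg', Function.update_self]; linarith
    · rw [hg', Function.update_of_ne ha]
  have := hf.2 g' hg'P hle
  have hx' : g' x = f x := congrFun this x
  rw [hg', Function.update_self] at hx'
  linarith

/-- For `f, g ∈ T_d`, `d∞(f,g) = sup {d x y - f x - g y : x, y ∈ X}`,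
both sides being taken in `[0,∞]`. -/
theorem statement2 {X : Type*} [Nonempty X] (d : X → X → ℝ)
    (hd : IsDistance d) (f g : X → ℝ) (hf : f ∈ Td d) (hg : g ∈ Td d) :
    dInfty f g = ⨆ x : X, ⨆ y : X, ENNReal.ofReal (d x y - f x - g y) := by
  set S := ⨆ x : X, ⨆ y : X, ENNReal.ofReal (d x y - f x - g y) with hS
  have hterm : ∀ a b : X, ENNReal.ofReal (d a b - f a - g b) ≤ S := fun a b =>
    le_trans (le_iSup (fun y => ENNReal.ofReal (d a y - f a - g y)) b)
      (le_iSup (fun x => ⨆ y, ENNReal.ofReal (d x y - f x - g y)) a)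
  apply le_antisymm
  · refine iSup_le fun x => ?_
    rw [edist_dist, Real.dist_eq]
    have key : ∀ t : ℝ, (∀ ε : ℝ, 0 < ε → ∃ a b, t ≤ d a b - f a - g b + ε) →
        ENNReal.ofReal t ≤ S := by
      intro t ht
      apply ENNReal.le_of_forall_pos_le_add
      intro ε hε _
      obtain ⟨a, b, hab⟩ := ht ε hε
      calc ENNReal.ofReal t ≤ ENNReal.ofReal ((d a b - f a - g b) + ε) :=
            ENNReal.ofReal_le_ofReal (by linarith)
        _ ≤ ENNReal.ofReal (d a b - f a - g b) + ENNReal.ofReal ε :=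
            ENNReal.ofReal_add_le
        _ ≤ S + ε := by
            rw [ENNReal.ofReal_coe_nnreal]
            exact add_le_add (hterm a b) le_rfl
    rcases abs_cases (f x - g x) with ⟨h1, _⟩ | ⟨h1, _⟩
    · rw [h1]
      apply key
      intro ε hε
      obtain ⟨y, hy⟩ := td_tight d hd f hf x ε hε
      exact ⟨y, x, by rw [hd.2.1 y x]; linarith⟩
    · rw [h1]
      apply key
      intro ε hε
      obtain ⟨y, hy⟩ := td_tight d hd g hg x ε hε
      exact ⟨x, y, by linarith⟩
  · refine iSup_le fun x => iSup_le fun y => ?_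
    have h1 : d x y - f x - g y ≤ f y - g y := by
      have := hf.1 x y; linarith
    have h2 : f y - g y ≤ |f y - g y| := le_abs_self _
    calc ENNReal.ofReal (d x y - f x - g y) ≤ ENNReal.ofReal |f y - g y| :=
          ENNReal.ofReal_le_ofReal (by linarith)
      _ = edist (f y) (g y) := by rw [edist_dist, Real.dist_eq]
      _ ≤ dInfty f g := le_iSup (fun z => edist (f z) (g z)) y
end

section
/- Let (X,d) be a distance space. If M(d) is empty then P_d and T_d are empty. If M(d) is non-empty then P_d = ⋃_{ρ∈M(d)} P_ρ and T_d ⊆ ⋃_{ρ∈M(d)} T_ρ. -/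
open scoped ENNReal

section Aux
open Classical in
/-- The pseudometric induced by `f ∈ P_d`. -/
noncomputable def rhoOf {Y : Type*} (f : Y → ℝ) : Y → Y → ℝ :=
  fun x y => if x = y then 0 else f x + f y

lemma f_nonneg {Y : Type*} {d : Y → Y → ℝ} (hd : IsDistance d) {f : Y → ℝ}
    (hf : f ∈ Pd d) : ∀ y, 0 ≤ f y := by
  intro y
  have := hf y y
  have h0 := hd.2.2 y
  linarith

lemma rhoOf_mem_Md {Y : Type*} {d : Y → Y → ℝ} (hd : IsDistance d) {f : Y → ℝ}
    (hf : f ∈ Pd d) : rhoOf f ∈ Md d := by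
  have hnn := f_nonneg hd hf
  refine ⟨⟨?_, ?_, ?_, ?_⟩, ?_⟩
  · intro x y
    by_cases h : x = y
    · simp [rhoOf, h]
    · simp only [rhoOf, if_neg h]
      have := hnn x; have := hnn y; linarith
  · intro x y
    by_cases h : x = y
    · simp [rhoOf, h]
    · simp [rhoOf, h, Ne.symm h]; ring
  · intro x; simp [rhoOf]
  · intro x y z
    by_cases hxz : x = z
    · subst hxz
      simp only [rhoOf, if_pos rfl]
      by_cases hxy : x = y
      · subst hxy; simp
      · simp [if_neg hxy, if_neg (Ne.symm hxy)]
        have := hnn x; have := hnn y; linarith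
    · simp only [rhoOf, if_neg hxz]
      by_cases hxy : x = y
      · subst hxy; simp [if_neg hxz]
      · by_cases hyz : y = z
        · subst hyz; simp [if_neg hxy]
        · simp [if_neg hxy, if_neg hyz]
          have := hnn y; linarith
  · intro x y
    by_cases h : x = y
    · subst h; simp [rhoOf, hd.2.2 x]
    · simpa [rhoOf, h] using hf x y

lemma mem_Pd_rhoOf {Y : Type*} {d : Y → Y → ℝ} (hd : IsDistance d) {f : Y → ℝ}
    (hf : f ∈ Pd d) : f ∈ Pd (rhoOf f) := by
  intro x y
  by_cases h : x = y
  · subst h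
    have := f_nonneg hd hf x
    simp only [rhoOf, if_pos trivial, eq_self_iff_true, if_true]
    linarith
  · simp [rhoOf, h]

lemma Pd_subset {Y : Type*} {d ρ : Y → Y → ℝ} (hρ : ρ ∈ Md d) :
    Pd ρ ⊆ Pd d := by
  intro g hg x y
  exact (hρ.2 x y).trans (hg x y)
end Aux

/-- If `M(d)` is empty then so are `P_d` and `T_d`; otherwise
`P_d = ⋃_{ρ ∈ M(d)} P_ρ` and `T_d ⊆ ⋃_{ρ ∈ M(d)} T_ρ`. -/
theorem statement3 {X : Type*} [Nonempty X] (d : X → X → ℝ)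
    (hd : IsDistance d) :
    (Md d = ∅ → Pd d = ∅ ∧ Td d = ∅) ∧
    ((Md d).Nonempty →
      (Pd d = ⋃ ρ ∈ Md d, Pd ρ) ∧ (Td d ⊆ ⋃ ρ ∈ Md d, Td ρ)) := by
  constructor
  · intro hMd
    have hP : Pd d = ∅ := by
      by_contra h
      obtain ⟨f, hf⟩ := Set.nonempty_iff_ne_empty.2 h
      exact absurd (rhoOf_mem_Md hd hf) (by simp [hMd])
    refine ⟨hP, ?_⟩
    ext f
    simp only [Set.mem_empty_iff_false, iff_false]
    intro hf
    have : f ∈ Pd d := hf.1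
    simp [hP] at this
  · intro _
    constructor
    · ext f
      simp only [Set.mem_iUnion]
      constructor
      · intro hf
        exact ⟨rhoOf f, rhoOf_mem_Md hd hf, mem_Pd_rhoOf hd hf⟩
      · rintro ⟨ρ, hρ, hf⟩
        exact Pd_subset hρ hf
    · intro f hf
      simp only [Set.mem_iUnion]
      refine ⟨rhoOf f, rhoOf_mem_Md hd hf.1, mem_Pd_rhoOf hd hf.1, ?_⟩
      intro g hg hgf
      exact hf.2 g (Pd_subset (rhoOf_mem_Md hd hf.1) hg) hgf
end

section
/- Let (X,d) be a distance space with M(d) non-empty. Then for all x,y ∈ X there exists ρ ∈ M(d) such that ρ(x,y) = d(x,y). -/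
open scoped ENNReal

/-- If `M(d)` is nonempty then for all `x, y` there is `ρ ∈ M(d)` with
`ρ x y = d x y`. -/
theorem statement4 {X : Type*} [Nonempty X] (d : X → X → ℝ)
    (hd : IsDistance d) (hM : (Md d).Nonempty) :
    ∀ x y : X, ∃ ρ ∈ Md d, ρ x y = d x y := by
  classical
  obtain ⟨σ, ⟨⟨σ0, σsymm, σdiag, σtri⟩, σge⟩⟩ := hM
  obtain ⟨d0, dsymm, ddiag⟩ := hd
  intro x y
  by_cases hxy : x = y
  · subst hxy
    exact ⟨σ, ⟨⟨σ0, σsymm, σdiag, σtri⟩, σge⟩, by rw [σdiag, ddiag]⟩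
  · set w := d x y with hw
    set f : X → ℝ := fun a => if a = x then w/2 else if a = y then w/2 else σ a x + σ x y
      with hf
    have hw0 : 0 ≤ w := d0 x y
    have hf0 : ∀ a, 0 ≤ f a := by
      intro a
      simp only [hf]
      split
      · linarith
      · split
        · linarith
        · have := σ0 a x; have := σ0 x y; linarith
    have hfx : f x = w / 2 := by simp [hf]
    have hfy : f y = w / 2 := by simp [hf, hxy, Ne.symm hxy]
    have hfgen : ∀ a, a ≠ x → a ≠ y → f a = σ a x + σ x y := by
      intro a h1 h2; simp [hf, h1, h2]
    have hfd : ∀ a b, d a b ≤ f a + f b := by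
      intro a b
      by_cases hax : a = x
      · rw [hax, hfx]
        by_cases hby : b = y
        · rw [hby, hfy]; linarith
        · by_cases hbx : b = x
          · rw [hbx, hfx, ddiag]; linarith
          · rw [hfgen b hbx hby]
            have h1 : d x b ≤ σ x b := σge x b
            have h2 : σ x b = σ b x := σsymm x b
            linarith [σ0 x y]
      · by_cases hay : a = y
        · rw [hay, hfy]
          by_cases hbx : b = x
          · rw [hbx, hfx, dsymm]; linarith
          · by_cases hby : b = y
            · rw [hby, hfy, ddiag]; linarith
            · rw [hfgen b hbx hby]
              have h1 : d y b ≤ σ y b := σge y b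
              have h2 : σ y b ≤ σ y x + σ x b := σtri y x b
              have h3 : σ y x = σ x y := σsymm y x
              have h4 : σ x b = σ b x := σsymm x b
              linarith
        · rw [hfgen a hax hay]
          by_cases hbx : b = x
          · rw [hbx, hfx]
            have h1 : d a x ≤ σ a x := σge a x
            linarith [σ0 x y]
          · by_cases hby : b = y
            · rw [hby, hfy]
              have h1 : d a y ≤ σ a y := σge a y
              have h2 : σ a y ≤ σ a x + σ x y := σtri a x y
              linarith
            · rw [hfgen b hbx hby]
              have h1 : d a b ≤ σ a b := σge a b
              have h2 : σ a b ≤ σ a x + σ x b := σtri a x b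
              have h3 : σ x b = σ b x := σsymm x b
              linarith [σ0 x y]
    refine ⟨fun a b => if a = b then 0 else f a + f b, ⟨⟨?_, ?_, ?_, ?_⟩, ?_⟩, ?_⟩
    · intro a b
      dsimp only
      split
      · exact le_refl 0
      · linarith [hf0 a, hf0 b]
    · intro a b
      dsimp only
      by_cases hab : a = b
      · simp [hab]
      · rw [if_neg hab, if_neg (Ne.symm hab)]; ring
    · intro a; simp
    · intro a b c
      dsimp only
      have h1 : (0:ℝ) ≤ if a = b then 0 else f a + f b := by
        split
        · exact le_refl 0
        · linarith [hf0 a, hf0 b]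
      have h2 : (0:ℝ) ≤ if b = c then 0 else f b + f c := by
        split
        · exact le_refl 0
        · linarith [hf0 b, hf0 c]
      by_cases hac : a = c
      · rw [if_pos hac]; linarith
      · rw [if_neg hac]
        by_cases hab : a = b
        · rw [if_pos hab, if_neg (hab ▸ hac), hab]; linarith
        · rw [if_neg hab]
          by_cases hbc : b = c
          · rw [if_pos hbc, hbc]; linarith
          · rw [if_neg hbc]; linarith [hf0 b]
    · intro a b
      dsimp only
      by_cases hab : a = b
      · rw [if_pos hab, hab, ddiag]
      · rw [if_neg hab]; exact hfd a b
    · dsimp only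
      rw [if_neg hxy, hfx, hfy]; ring
end

section
/- Let (X,d) be a distance space with M(d) non-empty. Then for all x,y ∈ X and all f ∈ T_d: (i) f(x) = inf{d∞(f,g) : g ∈ κ(x)}, and (ii) d(x,y) = inf{d∞(f,g) : f ∈ κ(x), g ∈ κ(y)}. -/
open scoped ENNReal

section Aux
variable {X : Type*} {d : X → X → ℝ}

lemma pd_nonneg (hd : IsDistance d) {f : X → ℝ} (hf : f ∈ Pd d) (x : X) : 0 ≤ f x := by
  have h1 := hf x x
  have h2 := hd.2.2 x
  linarith

lemma exists_td_le (hd : IsDistance d) {h : X → ℝ} (hh : h ∈ Pd d) :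
    ∃ g, g ∈ Td d ∧ g ≤ h := by
  set S : Set (X → ℝ) := {g | g ∈ Pd d ∧ g ≤ h} with hS
  obtain ⟨m, hm⟩ := zorn_le₀ (α := (X → ℝ)ᵒᵈ) S (by
    intro c hcS hchain
    rcases c.eq_empty_or_nonempty with rfl | ⟨y0, hy0⟩
    · refine ⟨h, ⟨hh, le_rfl⟩, ?_⟩
      intro z hz
      exact absurd hz (Set.notMem_empty z)
    · set m0 : X → ℝ := fun z => sInf ((fun g : X → ℝ => g z) '' c) with hm0
      have hbdd : ∀ z : X, BddBelow ((fun g : X → ℝ => g z) '' c) := by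
        intro z
        refine ⟨0, ?_⟩
        rintro r ⟨g, hg, rfl⟩
        exact pd_nonneg hd (hcS hg).1 z
      have hne : ∀ z : X, ((fun g : X → ℝ => g z) '' c).Nonempty :=
        fun z => ⟨y0 z, ⟨y0, hy0, rfl⟩⟩
      have hle : ∀ g ∈ c, ∀ z, m0 z ≤ g z := by
        intro g hg z
        exact csInf_le (hbdd z) ⟨g, hg, rfl⟩
      have hm0Pd : m0 ∈ Pd d := by
        intro z w
        by_contra hcon
        push_neg at hcon
        set ε : ℝ := (d z w - (m0 z + m0 w)) / 2 with hε
        have hεpos : 0 < ε := by simp only [hε]; linarith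
        obtain ⟨-, ⟨g1, hg1, rfl⟩, hlt1⟩ := Real.lt_sInf_add_pos (hne z) hεpos
        obtain ⟨-, ⟨g2, hg2, rfl⟩, hlt2⟩ := Real.lt_sInf_add_pos (hne w) hεpos
        have hzw : g1 ≤ g2 ∨ g2 ≤ g1 := by
          rcases eq_or_ne g1 g2 with heq | hne12
          · exact Or.inl (le_of_eq heq)
          · have h12 := hchain hg1 hg2 hne12
            have h12' : (g2 : X → ℝ) ≤ g1 ∨ (g1 : X → ℝ) ≤ g2 := h12
            exact h12'.symm
        rcases hzw with h' | h'
        · have h0 := (hcS hg1).1 z w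
          have h2' := h' w
          linarith
        · have h0 := (hcS hg2).1 z w
          have h1' := h' z
          linarith
      have hm0h : m0 ≤ h := le_trans (fun z => hle y0 hy0 z) (hcS hy0).2
      refine ⟨m0, ⟨hm0Pd, hm0h⟩, ?_⟩
      intro g hg
      show m0 ≤ g
      exact fun z => hle g hg z)
  refine ⟨m, ⟨hm.1.1, fun g hg hgle => ?_⟩, hm.1.2⟩
  have hgS : g ∈ S := ⟨hg, le_trans hgle hm.1.2⟩
  have hmg : ∀ z, m z ≤ g z := hm.2 hgS hgle
  exact funext fun z => le_antisymm (hgle z) (hmg z)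

lemma td_upper (hd : IsDistance d) {f : X → ℝ} (hf : f ∈ Td d) (y : X) (b : ℝ)
    (hb : 0 ≤ b) (hby : ∀ z, d y z ≤ b + f z) : f y ≤ b := by
  classical
  by_contra hlt
  push_neg at hlt
  set g : X → ℝ := Function.update f y b with hg
  have hgval : ∀ z, z ≠ y → g z = f z := fun z hz => Function.update_of_ne hz _ _
  have hgy : g y = b := by simp [hg]
  have hgPd : g ∈ Pd d := by
    intro z w
    by_cases hz : z = y <;> by_cases hw : w = y
    · rw [hz, hw, hgy, hd.2.2]
      linarith
    · rw [hz, hgy, hgval w hw]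
      exact hby w
    · rw [hw, hgy, hgval z hz, hd.2.1]
      have := hby z
      linarith
    · rw [hgval z hz, hgval w hw]
      exact hf.1 z w
  have hgle : g ≤ f := by
    intro z
    by_cases hz : z = y
    · rw [hz, hgy]; linarith
    · rw [hgval z hz]
  have heq := hf.2 g hgPd hgle
  have heq2 : g y = f y := by rw [heq]
  rw [hgy] at heq2
  linarith

lemma kappa_ge (hd : IsDistance d) {f : X → ℝ} {x : X} (hf : f ∈ kappa d x) (z : X) :
    d x z ≤ f z := by
  have := hf.1.1 x z
  rw [hf.2] at this
  linarith

lemma part_i (hd : IsDistance d) (x : X) (f : X → ℝ) (hf : f ∈ Td d) :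
    ENNReal.ofReal (f x) = ⨅ g ∈ kappa d x, dInfty f g := by
  classical
  have hfx0 : 0 ≤ f x := pd_nonneg hd hf.1 x
  set h : X → ℝ := fun z => if z = x then 0 else f z + f x with hh
  have hhx : h x = 0 := by simp [hh]
  have hhval : ∀ z, z ≠ x → h z = f z + f x := by
    intro z hz; simp [hh, hz]
  have hhle : ∀ z, h z ≤ f z + f x := by
    intro z
    by_cases hz : z = x
    · rw [hz, hhx]; linarith [pd_nonneg hd hf.1 x]
    · rw [hhval z hz]
  have hhPd : h ∈ Pd d := by
    intro z w
    by_cases hz : z = x <;> by_cases hw : w = x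
    · rw [hz, hw, hhx, hd.2.2]; linarith
    · rw [hz, hhx, hhval w hw]
      have := hf.1 x w
      linarith
    · rw [hw, hhx, hhval z hz]
      have := hf.1 z x
      linarith
    · rw [hhval z hz, hhval w hw]
      have := hf.1 z w
      linarith
  obtain ⟨g, hgTd, hgle⟩ := exists_td_le hd hhPd
  have hgx : g x = 0 := le_antisymm (by rw [← hhx]; exact hgle x) (pd_nonneg hd hgTd.1 x)
  have hgκ : g ∈ kappa d x := ⟨hgTd, hgx⟩
  have bound1 : ∀ z, g z - f z ≤ f x := by
    intro z
    have h1 := hgle z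
    have h2 := hhle z
    linarith
  have bound2 : ∀ z, f z - g z ≤ f x := by
    intro z
    have hgz : 0 ≤ g z := pd_nonneg hd hgTd.1 z
    have key : f z ≤ g z + f x := by
      refine td_upper hd hf z (g z + f x) (by linarith) ?_
      intro w
      have h1 := hgTd.1 z w
      have h2 := bound1 w
      linarith
    linarith
  apply le_antisymm
  · refine le_iInf₂ fun g' hg' => ?_
    have heq : ENNReal.ofReal (f x) = edist (f x) (g' x) := by
      rw [hg'.2, edist_dist, Real.dist_eq, sub_zero, abs_of_nonneg hfx0]
    rw [heq]
    exact le_iSup (fun z => edist (f z) (g' z)) x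
  · refine iInf₂_le_of_le g hgκ ?_
    refine iSup_le fun z => ?_
    rw [edist_dist, Real.dist_eq]
    refine ENNReal.ofReal_le_ofReal (abs_le.mpr ⟨?_, ?_⟩)
    · linarith [bound1 z]
    · linarith [bound2 z]

end Aux


/-- If `M(d)` is nonempty then for all `x, y ∈ X` and `f ∈ T_d`:
(i) `f x = inf {d∞(f,g) : g ∈ κ(x)}`, and
(ii) `d x y = inf {d∞(f,g) : f ∈ κ(x), g ∈ κ(y)}`. -/
theorem statement5 {X : Type*} [Nonempty X] (d : X → X → ℝ)
    (hd : IsDistance d) (hM : (Md d).Nonempty) :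
    (∀ x : X, ∀ f ∈ Td d,
      ENNReal.ofReal (f x) = ⨅ g ∈ kappa d x, dInfty f g) ∧
    ∀ x y : X,
      ENNReal.ofReal (d x y) =
        ⨅ f ∈ kappa d x, ⨅ g ∈ kappa d y, dInfty f g := by
  classical
  constructor
  · exact fun x f hf => part_i hd x f hf
  · intro x y
    obtain ⟨ρ, hρ, hρd⟩ := hM
    set h : X → ℝ := fun z => if z = x then 0 else if z = y then d x y else
      ρ x z + ρ x y - d x y with hh
    have hK : 0 ≤ ρ x y - d x y := by linarith [hρd x y]
    have hhx : h x = 0 := by simp [hh]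
    have hother : ∀ z, z ≠ x → z ≠ y → h z = ρ x z + ρ x y - d x y := by
      intro z h1 h2; simp [hh, h1, h2]
    have hyval : ∀ z, z ≠ x → z = y → h z = d x y := by
      intro z h1 h2
      simp only [hh]
      rw [if_neg h1, if_pos h2]
    have claim2 : ∀ z, d x z ≤ h z := by
      intro z
      by_cases h1 : z = x
      · rw [h1, hhx, hd.2.2]
      · by_cases h2 : z = y
        · rw [hyval z h1 h2, h2]
        · rw [hother z h1 h2]; linarith [hρd x z]
    have claim3 : ∀ z, d y z ≤ d x y + h z := by
      intro z
      by_cases h1 : z = x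
      · rw [h1, hhx, hd.2.1 y x]; linarith
      · by_cases h2 : z = y
        · rw [hyval z h1 h2, h2]
          linarith [hd.2.2 y, hd.1 x y]
        · rw [hother z h1 h2]
          have t := hρ.2.2.2 y x z
          have s1 := hρ.2.1 y x
          linarith [hρd y z]
    have hhPd : h ∈ Pd d := by
      intro z w
      by_cases hzx : z = x
      · rw [hzx, hhx]; linarith [claim2 w]
      · by_cases hwx : w = x
        · rw [hwx, hhx, hd.2.1 z x]; linarith [claim2 z]
        · by_cases hzy : z = y
          · have hyx : y ≠ x := hzy ▸ hzx
            rw [hzy, hyval y hyx rfl]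
            exact claim3 w
          · by_cases hwy : w = y
            · have hyx : y ≠ x := hwy ▸ hwx
              rw [hwy, hyval y hyx rfl, hd.2.1 z y]
              linarith [claim3 z]
            · rw [hother z hzx hzy, hother w hwx hwy]
              have t := hρ.2.2.2 z x w
              have s1 := hρ.2.1 z x
              linarith [hρd z w]
    obtain ⟨f₀, hf₀Td, hf₀le⟩ := exists_td_le hd hhPd
    have hf₀x : f₀ x = 0 :=
      le_antisymm (by rw [← hhx]; exact hf₀le x) (pd_nonneg hd hf₀Td.1 x)
    have hf₀κ : f₀ ∈ kappa d x := ⟨hf₀Td, hf₀x⟩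
    have hhy : h y ≤ d x y := by
      by_cases h1 : y = x
      · rw [h1, hhx, hd.2.2 x]
      · rw [hyval y h1 rfl]
    have hf₀y : f₀ y = d x y :=
      le_antisymm (le_trans (hf₀le y) hhy) (kappa_ge hd hf₀κ y)
    apply le_antisymm
    · refine le_iInf₂ fun f hf => le_iInf₂ fun g hg => ?_
      have h1 : d x y ≤ f y := kappa_ge hd hf y
      have h2 : ENNReal.ofReal (d x y) ≤ edist (f y) (g y) := by
        rw [hg.2, edist_dist, Real.dist_eq, sub_zero,
          abs_of_nonneg (pd_nonneg hd hf.1.1 y)]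
        exact ENNReal.ofReal_le_ofReal h1
      exact h2.trans (le_iSup (fun z => edist (f z) (g z)) y)
    · refine iInf₂_le_of_le f₀ hf₀κ ?_
      rw [← part_i hd y f₀ hf₀Td, hf₀y]
end

section
/- Let (X,d) be a distance space such that (T_d,d∞) is a metric space (T_d is non-empty and d∞(f,g) < ∞ for all f,g ∈ T_d). Then (T_d,d∞) is hyperconvex. -/
open scoped ENNReal

lemma Pd_nonneg {X : Type*} {d : X → X → ℝ} (hd : IsDistance d) {f : X → ℝ}
    (hf : f ∈ Pd d) (x : X) : 0 ≤ f x := by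
  have h := hf x x
  rw [hd.2.2 x] at h; linarith

/-- Zorn: below every element of `Pd d` there is a minimal element. -/
lemma exists_Td_le {X : Type*} {d : X → X → ℝ} (hd : IsDistance d) {g : X → ℝ}
    (hg : g ∈ Pd d) : ∃ z ∈ Td d, z ≤ g := by
  set S : Set (X → ℝ) := {h | h ∈ Pd d ∧ h ≤ g} with hS
  have key : ∀ c ⊆ S, IsChain (· ≤ ·) c → ∀ y ∈ c, ∃ lb ∈ S, ∀ z ∈ c, lb ≤ z := by
    intro c hcS hchain y hyc
    set lb : X → ℝ := fun x => sInf ((fun h : X → ℝ => h x) '' c) with hlb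
    have hbdd : ∀ x : X, BddBelow ((fun h : X → ℝ => h x) '' c) := by
      intro x
      exact ⟨0, by rintro t ⟨h, hh, rfl⟩; exact Pd_nonneg hd (hcS hh).1 x⟩
    have hlble : ∀ h ∈ c, ∀ x, lb x ≤ h x := by
      intro h hh x
      exact csInf_le (hbdd x) ⟨h, hh, rfl⟩
    have hlbP : lb ∈ Pd d := by
      intro u v
      by_contra hcon
      push_neg at hcon
      set ε := (lb u + lb v - d u v) / 2 with hε
      have hεneg : ε < 0 := by rw [hε]; linarith
      obtain ⟨h1, hh1, hlt1⟩ : ∃ h ∈ c, h u < lb u - ε := by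
        by_contra hc2
        push_neg at hc2
        have : lb u - ε ≤ lb u := le_csInf ⟨y u, ⟨y, hyc, rfl⟩⟩ (by rintro t ⟨h, hh, rfl⟩; exact hc2 h hh)
        linarith
      obtain ⟨h2, hh2, hlt2⟩ : ∃ h ∈ c, h v < lb v - ε := by
        by_contra hc2
        push_neg at hc2
        have : lb v - ε ≤ lb v := le_csInf ⟨y v, ⟨y, hyc, rfl⟩⟩ (by rintro t ⟨h, hh, rfl⟩; exact hc2 h hh)
        linarith
      rcases hchain.total hh1 hh2 with hle | hle
      · have := (hcS hh1).1 u v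
        have h2v : h1 v ≤ h2 v := hle v
        nlinarith [hlble h1 hh1 v]
      · have := (hcS hh2).1 u v
        have h1u : h2 u ≤ h1 u := hle u
        nlinarith
    refine ⟨lb, ⟨hlbP, fun x => le_trans (hlble y hyc x) ((hcS hyc).2 x)⟩, fun z hz x => hlble z hz x⟩
  obtain ⟨m, hmg, hm⟩ := zorn_le_nonempty₀ (α := (X → ℝ)ᵒᵈ) S
    (fun c hcS hchain y hy => by
      obtain ⟨lb, hlbS, hlb⟩ := key c hcS hchain.symm y hy
      exact ⟨lb, hlbS, fun z hz => hlb z hz⟩) g ⟨hg, le_refl g⟩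
  refine ⟨m, ⟨hm.1.1, fun g' hg' hle => ?_⟩, hmg⟩
  have hg'S : g' ∈ S := ⟨hg', le_trans hle hmg⟩
  exact le_antisymm hle (hm.2 hg'S hle)

/-- Key property of minimal elements. -/
lemma Td_le_of_bound {X : Type*} {d : X → X → ℝ} (hd : IsDistance d) {f : X → ℝ}
    (hf : f ∈ Td d) (x : X) {b : ℝ} (hb0 : 0 ≤ b) (hb : ∀ y, d x y - f y ≤ b) :
    f x ≤ b := by
  classical
  set g : X → ℝ := fun y => if y = x then min (f x) b else f y with hgdef
  have hgx : g x = min (f x) b := if_pos rfl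
  have hgval : ∀ w, w ≠ x → g w = f w := fun w hw => if_neg hw
  have hfx0 : 0 ≤ f x := Pd_nonneg hd hf.1 x
  have hmin0 : 0 ≤ min (f x) b := le_min hfx0 hb0
  have hgP : g ∈ Pd d := by
    intro u v
    by_cases hu : u = x <;> by_cases hv : v = x
    · rw [hu, hv, hgx, hd.2.2 x]; linarith
    · rw [hu, hgx, hgval v hv]
      have h1 : d x v - f v ≤ b := hb v
      have h2 : d x v ≤ f x + f v := hf.1 x v
      rcases le_total (f x) b with h | h
      · rw [min_eq_left h]; linarith
      · rw [min_eq_right h]; linarith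
    · rw [hv, hgval u hu, hgx]
      have h1 : d x u - f u ≤ b := hb u
      have h2 : d u x ≤ f u + f x := hf.1 u x
      rw [hd.2.1 u x]
      rcases le_total (f x) b with h | h
      · rw [min_eq_left h]; rw [hd.2.1 u x] at h2; linarith
      · rw [min_eq_right h]; linarith
    · rw [hgval u hu, hgval v hv]; exact hf.1 u v
  have hgle : g ≤ f := by
    intro w
    by_cases h : w = x
    · rw [h, hgx]; exact min_le_left _ _
    · rw [hgval w h]
  have heq := hf.2 g hgP hgle
  have hx : g x = f x := by rw [heq]
  rw [hgx] at hx
  exact (min_eq_left_iff.mp hx)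

/-- If `(T_d, d∞)` is a metric space (nonempty with all distances finite),
then it is hyperconvex. -/
theorem statement6 {X : Type*} [Nonempty X] (d : X → X → ℝ)
    (hd : IsDistance d) (hne : (Td d).Nonempty)
    (hfin : ∀ f ∈ Td d, ∀ g ∈ Td d, dInfty f g ≠ ⊤) :
    ∀ (ι : Type*) (y : ι → X → ℝ), (∀ α, y α ∈ Td d) →
      ∀ r : ι → ℝ, (∀ α, 0 ≤ r α) →
      (∀ α β, dInfty (y α) (y β) ≤ ENNReal.ofReal (r α + r β)) →
      ∃ z ∈ Td d, ∀ α, dInfty (y α) z ≤ ENNReal.ofReal (r α) := by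
  intro ι y hy r hr hyr
  rcases isEmpty_or_nonempty ι with hι | hι
  · obtain ⟨z, hz⟩ := hne
    exact ⟨z, hz, fun α => (hι.false α).elim⟩
  -- pointwise distance bound from hyr
  have hdist : ∀ α β x, |y α x - y β x| ≤ r α + r β := by
    intro α β x
    have h1 : edist (y α x) (y β x) ≤ ENNReal.ofReal (r α + r β) :=
      le_trans (le_iSup (fun x => edist (y α x) (y β x)) x) (hyr α β)
    rw [edist_dist] at h1
    rw [← Real.dist_eq]
    exact (ENNReal.ofReal_le_ofReal_iff (by have := hr α; have := hr β; linarith)).mp h1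
  -- define g = inf_α (y α + r α)
  set g : X → ℝ := fun x => ⨅ α, (y α x + r α) with hgdef
  have hbdd : ∀ x, BddBelow (Set.range fun α => y α x + r α) := by
    intro x
    refine ⟨0, ?_⟩
    rintro t ⟨α, rfl⟩
    have := Pd_nonneg hd (hy α).1 x
    have := hr α
    positivity
  have hgle : ∀ α x, g x ≤ y α x + r α := fun α x => ciInf_le (hbdd x) α
  have hgP : g ∈ Pd d := by
    intro u v
    have key : ∀ β : ι, d u v ≤ g u + (y β v + r β) := by
      intro β
      rw [hgdef]
      rw [← sub_le_iff_le_add]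
      refine le_ciInf fun α => ?_
      rw [sub_le_iff_le_add]
      have h1 : d u v ≤ y β u + y β v := (hy β).1 u v
      have h2 : y β u - y α u ≤ r α + r β := by
        have := hdist β α u; rw [abs_sub_le_iff] at this
        linarith [this.1]
      linarith
    have : d u v - g u ≤ g v := le_ciInf fun β => by linarith [key β]
    linarith
  obtain ⟨z, hzT, hzg⟩ := exists_Td_le hd hgP
  refine ⟨z, hzT, fun α => ?_⟩
  -- pointwise: |y α x - z x| ≤ r α
  have hpt : ∀ x, |y α x - z x| ≤ r α := by
    intro x
    have h1 : z x ≤ y α x + r α := le_trans (hzg x) (hgle α x)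
    have h2 : y α x ≤ z x + r α := by
      refine Td_le_of_bound hd (hy α) x ?_ ?_
      · have := Pd_nonneg hd hzT.1 x; have := hr α; linarith
      · intro w
        have hzw : z w ≤ y α w + r α := le_trans (hzg w) (hgle α w)
        have := hzT.1 x w
        linarith
    rw [abs_sub_le_iff]; constructor <;> linarith
  refine iSup_le fun x => ?_
  rw [edist_dist, Real.dist_eq]
  exact ENNReal.ofReal_le_ofReal (hpt x)
end

section
/- Let (X,d) be a distance space such that (T_d,d∞) is a metric space (T_d is non-empty and d∞(f,g) < ∞ for all f,g ∈ T_d), and let ρ ∈ M(d) be minimal in M(d) with respect to ⪯. Then there exists a map ψ : X → T_d such that ψ(x) ∈ κ(x) and d∞(ψ(x),ψ(y)) = ρ(x,y) for all x,y ∈ X. -/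
open scoped ENNReal

section Aux

variable {X : Type*}

/-- Auxiliary set of "compatible families" used in the proof. -/
def SFam (d ρ : X → X → ℝ) : Set (X → X → ℝ) :=
  {F | (∀ x, F x ∈ Pd d) ∧ (∀ x, F x x = 0) ∧ (∀ x y z, F x z ≤ ρ x y + F y z) ∧
    ∀ x z, F x z ≤ ρ x z}

lemma sfam_nonneg {d ρ : X → X → ℝ} (hd0 : ∀ z, d z z = 0) {F : X → X → ℝ}
    (hF : F ∈ SFam d ρ) (x z : X) : 0 ≤ F x z := by
  have h := hF.1 x z z
  have h0 := hd0 z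
  linarith

/-- Zorn's lemma: a minimal compatible family exists. -/
lemma exists_min_sfam (d ρ : X → X → ℝ) (hρS : ρ ∈ SFam d ρ) (hd0 : ∀ z, d z z = 0) :
    ∃ F ∈ SFam d ρ, ∀ G ∈ SFam d ρ, G ≤ F → G = F := by
  have hchain : ∀ c ⊆ (OrderDual.ofDual ⁻¹' SFam d ρ), IsChain (· ≤ ·) c →
      ∃ ub ∈ (OrderDual.ofDual ⁻¹' SFam d ρ), ∀ z ∈ c, z ≤ ub := by
    intro c hcS hc
    rcases c.eq_empty_or_nonempty with rfl | ⟨F₀, hF₀⟩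
    · exact ⟨OrderDual.toDual ρ, hρS, fun z hz => absurd hz (Set.notMem_empty z)⟩
    -- nonempty chain: take the pointwise infimum
    set L : X → X → ℝ := fun x z =>
      sInf ((fun F : (X → X → ℝ)ᵒᵈ => OrderDual.ofDual F x z) '' c) with hL
    have hne : ∀ x z, ((fun F : (X → X → ℝ)ᵒᵈ => OrderDual.ofDual F x z) '' c).Nonempty :=
      fun x z => ⟨_, F₀, hF₀, rfl⟩
    have hbd : ∀ x z, BddBelow ((fun F : (X → X → ℝ)ᵒᵈ => OrderDual.ofDual F x z) '' c) := by
      intro x z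
      refine ⟨0, ?_⟩
      rintro r ⟨F, hFc, rfl⟩
      exact sfam_nonneg hd0 (hcS hFc) x z
    have hle : ∀ F ∈ c, ∀ x z, L x z ≤ OrderDual.ofDual F x z := by
      intro F hFc x z
      exact csInf_le (hbd x z) ⟨F, hFc, rfl⟩
    have hglb : ∀ x z (r : ℝ), (∀ F ∈ c, r ≤ OrderDual.ofDual F x z) → r ≤ L x z := by
      intro x z r h
      refine le_csInf (hne x z) ?_
      rintro s ⟨F, hFc, rfl⟩
      exact h F hFc
    -- comparability of chain members, in the original order
    have hcomp : ∀ F ∈ c, ∀ G ∈ c,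
        OrderDual.ofDual F ≤ OrderDual.ofDual G ∨ OrderDual.ofDual G ≤ OrderDual.ofDual F := by
      intro F hF G hG
      rcases eq_or_ne F G with rfl | hne'
      · exact Or.inl le_rfl
      · rcases hc hF hG hne' with h | h
        · exact Or.inr h
        · exact Or.inl h
    have hLS : L ∈ SFam d ρ := by
      refine ⟨?_, ?_, ?_, ?_⟩
      · -- Pd
        intro x z w
        have key : ∀ F ∈ c, d z w - L x w ≤ OrderDual.ofDual F x z := by
          intro F hFc
          have h2 : ∀ G ∈ c, d z w - OrderDual.ofDual F x z ≤ OrderDual.ofDual G x w := by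
            intro G hGc
            rcases hcomp F hFc G hGc with h | h
            · have := (hcS hFc).1 x z w
              have := h x w
              linarith
            · have := (hcS hGc).1 x z w
              have := h x z
              linarith
          have := hglb x w _ h2
          linarith
        have := hglb x z _ key
        linarith
      · -- diagonal
        intro x
        refine le_antisymm ?_ (hglb x x 0 (fun F hFc => sfam_nonneg hd0 (hcS hFc) x x))
        have := hle F₀ hF₀ x x
        have h0 := (hcS hF₀).2.1 x
        linarith
      · -- Lipschitz
        intro x y z
        have key : ∀ F ∈ c, L x z - ρ x y ≤ OrderDual.ofDual F y z := by
          intro F hFc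
          have h1 := hle F hFc x z
          have h2 := (hcS hFc).2.2.1 x y z
          linarith
        have := hglb y z _ key
        linarith
      · -- ≤ ρ
        intro x z
        have h1 := hle F₀ hF₀ x z
        have h2 := (hcS hF₀).2.2.2 x z
        linarith
    exact ⟨OrderDual.toDual L, hLS, fun F hFc => fun x => fun z => hle F hFc x z⟩
  obtain ⟨m, hm⟩ := zorn_le₀ (α := (X → X → ℝ)ᵒᵈ) (OrderDual.ofDual ⁻¹' SFam d ρ) hchain
  refine ⟨OrderDual.ofDual m, hm.1, fun G hG hGm => ?_⟩
  have h2 : (OrderDual.toDual G : (X → X → ℝ)ᵒᵈ) ≤ m := hm.2 hG hGm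
  exact le_antisymm hGm h2

end Aux

/-- If `(T_d, d∞)` is a metric space and `ρ` is minimal in `M(d)`, then there
is `ψ : X → T_d` with `ψ x ∈ κ(x)` and `d∞(ψ x, ψ y) = ρ x y`. -/
theorem statement10 {X : Type*} [Nonempty X] (d : X → X → ℝ)
    (hd : IsDistance d) (hne : (Td d).Nonempty)
    (hfin : ∀ f ∈ Td d, ∀ g ∈ Td d, dInfty f g ≠ ⊤)
    (ρ : X → X → ℝ) (hρ : ρ ∈ Md d)
    (hmin : ∀ ρ' ∈ Md d, ρ' ≤ ρ → ρ' = ρ) :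
    ∃ ψ : X → (X → ℝ),
      (∀ x, ψ x ∈ kappa d x) ∧
      ∀ x y, dInfty (ψ x) (ψ y) = ENNReal.ofReal (ρ x y) := by
  obtain ⟨hd0, hdsym, hddiag⟩ := hd
  obtain ⟨⟨hρ0, hρsym, hρdiag, hρtri⟩, hdρ⟩ := hρ
  -- ρ itself is a compatible family
  have hρS : ρ ∈ SFam d ρ := by
    refine ⟨fun x z w => ?_, hρdiag, hρtri, fun x z => le_rfl⟩
    have h1 := hdρ z w
    have h2 := hρtri z x w
    have h3 := hρsym z x
    linarith
  obtain ⟨F, hFS, hFmin⟩ := exists_min_sfam d ρ hρS hddiag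
  obtain ⟨hFPd, hFdiag, hFlip, hFρ⟩ := hFS
  have hF0 : ∀ x z, 0 ≤ F x z := sfam_nonneg hddiag ⟨hFPd, hFdiag, hFlip, hFρ⟩
  have hFd : ∀ x z, d x z ≤ F x z := by
    intro x z
    have h := hFPd x x z
    have h0 := hFdiag x
    linarith
  -- each F x is in the tight span
  have hTd : ∀ x, F x ∈ Td d := by
    intro x
    refine ⟨hFPd x, fun g hgPd hg => ?_⟩
    have hg0 : ∀ z, 0 ≤ g z := by
      intro z
      have h := hgPd z z
      have h0 := hddiag z
      linarith
    set G : X → X → ℝ := fun y z => min (F y z) (ρ y x + g z) with hGdef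
    have hGS : G ∈ SFam d ρ := by
      refine ⟨?_, ?_, ?_, ?_⟩
      · intro y z w
        have A1 := hgPd z w
        have A2z : g z ≤ ρ y x + F y z := by
          have h1 := hg z
          have h2 := hFlip x y z
          have h3 := hρsym x y
          linarith
        have A2w : g w ≤ ρ y x + F y w := by
          have h1 := hg w
          have h2 := hFlip x y w
          have h3 := hρsym x y
          linarith
        have hρxy := hρ0 y x
        have hPd := hFPd y z w
        rcases le_total (F y z) (ρ y x + g z) with h1 | h1 <;>
          rcases le_total (F y w) (ρ y x + g w) with h2 | h2 <;>
          simp only [hGdef, min_eq_left h1, min_eq_right h1, min_eq_left h2, min_eq_right h2] <;>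
          linarith
      · intro y
        have : G y y = min (F y y) (ρ y x + g y) := rfl
        rw [this, hFdiag y]
        exact min_eq_left (add_nonneg (hρ0 y x) (hg0 y))
      · intro y y' z
        rcases le_total (F y' z) (ρ y' x + g z) with h | h
        · have : G y' z = F y' z := min_eq_left h
          rw [this]
          calc G y z ≤ F y z := min_le_left _ _
            _ ≤ ρ y y' + F y' z := hFlip y y' z
        · have : G y' z = ρ y' x + g z := min_eq_right h
          rw [this]
          calc G y z ≤ ρ y x + g z := min_le_right _ _
            _ ≤ ρ y y' + (ρ y' x + g z) := by
                have := hρtri y y' x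
                linarith
      · intro y z
        exact le_trans (min_le_left _ _) (hFρ y z)
    have hGF : G ≤ F := fun y z => min_le_left _ _
    have hGeq := hFmin G hGS hGF
    funext z
    refine le_antisymm (hg z) ?_
    have h1 : G x z = F x z := by rw [hGeq]
    have h2 : G x z ≤ ρ x x + g z := min_le_right _ _
    rw [h1, hρdiag x] at h2
    linarith
  -- distance computation
  have habs : ∀ x y z, |F x z - F y z| ≤ ρ x y := by
    intro x y z
    rw [abs_sub_le_iff]
    constructor
    · have := hFlip x y z
      linarith
    · have h1 := hFlip y x z
      have h2 := hρsym x y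
      linarith
  have hub : ∀ x y, dInfty (F x) (F y) ≤ ENNReal.ofReal (ρ x y) := by
    intro x y
    refine iSup_le fun z => ?_
    rw [edist_dist, Real.dist_eq]
    exact ENNReal.ofReal_le_ofReal (habs x y z)
  have hfin' : ∀ x y, dInfty (F x) (F y) ≠ ⊤ :=
    fun x y => ne_top_of_le_ne_top ENNReal.ofReal_ne_top (hub x y)
  set σ : X → X → ℝ := fun x y => (dInfty (F x) (F y)).toReal with hσdef
  have hσle : ∀ x y, σ x y ≤ ρ x y := by
    intro x y
    have := ENNReal.toReal_mono ENNReal.ofReal_ne_top (hub x y)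
    rwa [ENNReal.toReal_ofReal (hρ0 x y)] at this
  have hFleσ : ∀ x y, F x y ≤ σ x y := by
    intro x y
    have h1 : ENNReal.ofReal (F x y) ≤ dInfty (F x) (F y) := by
      have h2 : edist (F x y) (F y y) = ENNReal.ofReal (F x y) := by
        rw [edist_dist, Real.dist_eq, hFdiag y, sub_zero, abs_of_nonneg (hF0 x y)]
      rw [← h2]
      exact le_iSup (fun z => edist (F x z) (F y z)) y
    have := ENNReal.toReal_mono (hfin' x y) h1
    rwa [ENNReal.toReal_ofReal (hF0 x y)] at this
  have hσMd : σ ∈ Md d := by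
    refine ⟨⟨fun x y => ENNReal.toReal_nonneg, ?_, ?_, ?_⟩, ?_⟩
    · intro x y
      simp only [hσdef, dInfty]
      congr 1
      simp_rw [edist_comm]
    · intro x
      simp [hσdef, dInfty]
    · intro x y z
      have h : dInfty (F x) (F z) ≤ dInfty (F x) (F y) + dInfty (F y) (F z) := by
        refine iSup_le fun w => ?_
        refine le_trans (edist_triangle (F x w) (F y w) (F z w)) ?_
        exact add_le_add (le_iSup (fun w => edist (F x w) (F y w)) w)
          (le_iSup (fun w => edist (F y w) (F z w)) w)
      have hfin2 : dInfty (F x) (F y) + dInfty (F y) (F z) ≠ ⊤ :=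
        ENNReal.add_ne_top.2 ⟨hfin' x y, hfin' y z⟩
      have := ENNReal.toReal_mono hfin2 h
      rwa [ENNReal.toReal_add (hfin' x y) (hfin' y z)] at this
    · intro x y
      exact le_trans (hFd x y) (hFleσ x y)
  have hσρ : σ = ρ := hmin σ hσMd (fun x => fun y => hσle x y)
  refine ⟨F, fun x => ⟨hTd x, hFdiag x⟩, fun x y => ?_⟩
  refine le_antisymm (hub x y) ?_
  have : ENNReal.ofReal (ρ x y) = ENNReal.ofReal (σ x y) := by rw [hσρ]
  rw [this, hσdef]
  exact ENNReal.ofReal_toReal_le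
end

section
/- A distance space (X,d) is dominated by a pseudometric (i.e., M(d) is non-empty) if and only if there exists a countable chain X₁ ⊆ X₂ ⊆ ⋯ of subsets of X with ⋃_{n=1}^∞ X_n = X such that each X_n is bounded, i.e., sup{d(x,y) : x,y ∈ X_n} < ∞. -/
open scoped ENNReal

/-- `M(d)` is nonempty iff `X` is covered by a countable increasing chain of
`d`-bounded subsets. -/
theorem statement12 {X : Type*} [Nonempty X] (d : X → X → ℝ)
    (hd : IsDistance d) :
    (Md d).Nonempty ↔
      ∃ Xn : ℕ → Set X, (∀ n, Xn n ⊆ Xn (n + 1)) ∧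
        (⋃ n, Xn n) = Set.univ ∧
        ∀ n, ∃ C : ℝ, ∀ x ∈ Xn n, ∀ y ∈ Xn n, d x y ≤ C := by

  obtain ⟨hpos, hsymm, hzero⟩ := hd
  constructor
  · rintro ⟨ρ, ⟨hρpos, hρsymm, hρzero, hρtri⟩, hdom⟩
    obtain ⟨x₀⟩ := ‹Nonempty X›
    refine ⟨fun n => {x | ρ x₀ x ≤ n}, ?_, ?_, ?_⟩
    · intro n x hx
      simp only [Set.mem_setOf_eq] at hx ⊢
      have : ((n : ℝ)) ≤ ((n + 1 : ℕ) : ℝ) := by push_cast; linarith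
      linarith
    · ext x
      simp only [Set.mem_iUnion, Set.mem_univ, iff_true]
      obtain ⟨n, hn⟩ := exists_nat_ge (ρ x₀ x)
      exact ⟨n, hn⟩
    · intro n
      refine ⟨2 * n, fun x hx y hy => ?_⟩
      have h1 := hρtri x x₀ y
      have h2 := hρsymm x x₀
      have h3 := hdom x y
      simp only [Set.mem_setOf_eq] at hx hy
      linarith
  · rintro ⟨Xn, hchain, huniv, hbdd⟩
    choose C hC using hbdd
    have hmono : Monotone Xn := monotone_nat_of_le_succ hchain
    have hex : ∀ x : X, ∃ n, x ∈ Xn n := by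
      intro x
      have : x ∈ ⋃ n, Xn n := huniv ▸ Set.mem_univ x
      simpa using this
    choose nx hnx using hex
    classical
    set B : ℕ → ℝ := fun n => max 0 ((Finset.range (n+1)).sup' (by simp) C) with hBdef
    have hB0 : ∀ n, 0 ≤ B n := fun n => le_max_left _ _
    have hBmono : Monotone B := by
      intro m n hmn
      exact max_le_max le_rfl (Finset.sup'_mono C
        (Finset.range_subset_range.2 (by omega)) (by simp))
    have hCB : ∀ n, C n ≤ B n := by
      intro n
      refine le_trans ?_ (le_max_right _ _)
      exact Finset.le_sup' C (Finset.self_mem_range_succ n)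
    refine ⟨fun x y => if x = y then 0 else B (max (nx x) (nx y)), ⟨?_, ?_, ?_, ?_⟩, ?_⟩
    · intro x y
      by_cases h : x = y <;> simp [h, hB0]
    · intro x y
      by_cases h : x = y
      · simp [h]
      · simp [h, Ne.symm h, Nat.max_comm]
    · intro x; simp
    · intro x y z
      by_cases hxy : x = y
      · subst hxy
        simp
      · by_cases hyz : y = z
        · subst hyz
          simp
        · simp only []
          rw [if_neg hxy, if_neg hyz]
          by_cases hxz : x = z
          · rw [if_pos hxz]
            have := hB0 (max (nx x) (nx y))
            have := hB0 (max (nx y) (nx z))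
            linarith
          · rw [if_neg hxz]
            have hle : max (nx x) (nx z) ≤ max (max (nx x) (nx y)) (max (nx y) (nx z)) := by
              omega
            calc B (max (nx x) (nx z))
                ≤ B (max (max (nx x) (nx y)) (max (nx y) (nx z))) := hBmono hle
              _ ≤ max (B (max (nx x) (nx y))) (B (max (nx y) (nx z))) := by
                  rcases max_cases (max (nx x) (nx y)) (max (nx y) (nx z)) with ⟨h, _⟩ | ⟨h, _⟩ <;>
                    rw [h]
                  · exact le_max_left _ _
                  · exact le_max_right _ _
              _ ≤ B (max (nx x) (nx y)) + B (max (nx y) (nx z)) := by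
                  have := hB0 (max (nx x) (nx y))
                  have := hB0 (max (nx y) (nx z))
                  rcases max_cases (B (max (nx x) (nx y))) (B (max (nx y) (nx z))) with
                    ⟨h, _⟩ | ⟨h, _⟩ <;> rw [h] <;> linarith
    · intro x y
      by_cases h : x = y
      · simp [h, hzero]
      · simp only [if_neg h]
        set m := max (nx x) (nx y) with hm
        have hxm : x ∈ Xn m := hmono (le_max_left _ _) (hnx x)
        have hym : y ∈ Xn m := hmono (le_max_right _ _) (hnx y)
        exact le_trans (hC m x hxm y hym) (hCB m)
end

section
/- Let (X,d) be a distance space satisfying the extended four-point condition. Then T_d is non-empty, d∞(f,g) < ∞ for all f,g ∈ T_d (so (T_d,d∞) is a metric space), and (T_d,d∞) satisfies the classical four-point condition: d∞(f₁,f₂) + d∞(g₁,g₂) ≤ max{ d∞(f₁,g₁) + d∞(f₂,g₂), d∞(f₁,g₂) + d∞(f₂,g₁) } for all f₁,f₂,g₁,g₂ ∈ T_d. -/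
open scoped ENNReal

section EFPCDef

variable {Y : Type*}

/-- The extended four-point condition of Hirai. -/
def EFPC (d : Y → Y → ℝ) : Prop :=
  ∀ w x y z : Y,
    d x y + d z w ≤
      max (d x y) (max (d w z) (max (d w x + d y z) (max (d x z + d w y)
        (max ((d x y + d y z + d z x) / 2) (max ((d x y + d y w + d w x) / 2)
          (max ((d x z + d z w + d w x) / 2) ((d y z + d z w + d w y) / 2)))))))

end EFPCDef

namespace Statement13Aux

variable {X : Type*}

theorem pd_nonneg {d : X → X → ℝ} (hd : IsDistance d) {f : X → ℝ} (hf : f ∈ Pd d) (x : X) :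
    0 ≤ f x := by
  have h := hf x x
  rw [hd.2.2 x] at h
  linarith

/-- Zorn: below any element of `P_d` there is a minimal one, i.e. an element of `T_d`. -/
theorem exists_td_le (d : X → X → ℝ) (hd : IsDistance d) {h : X → ℝ} (hh : h ∈ Pd d) :
    ∃ f, f ∈ Td d ∧ f ≤ h := by
  classical
  set S : Set ((X → ℝ)ᵒᵈ) :=
    {g | OrderDual.ofDual g ∈ Pd d ∧ OrderDual.ofDual g ≤ h} with hS
  have key : ∀ c ⊆ S, IsChain (· ≤ ·) c → ∀ y ∈ c, ∃ ub ∈ S, ∀ z ∈ c, z ≤ ub := by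
    intro c hcS hchain y hyc
    set m : X → ℝ := fun x => sInf ((fun g : (X → ℝ)ᵒᵈ => OrderDual.ofDual g x) '' c) with hm
    have hne : ∀ x : X, ((fun g : (X → ℝ)ᵒᵈ => OrderDual.ofDual g x) '' c).Nonempty :=
      fun x => ⟨_, ⟨y, hyc, rfl⟩⟩
    have hbdd : ∀ x : X, BddBelow ((fun g : (X → ℝ)ᵒᵈ => OrderDual.ofDual g x) '' c) := by
      intro x
      refine ⟨0, ?_⟩
      rintro v ⟨g, hg, rfl⟩
      exact pd_nonneg hd (hcS hg).1 x
    have hmle : ∀ g ∈ c, ∀ x, m x ≤ OrderDual.ofDual g x := by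
      intro g hg x
      exact csInf_le (hbdd x) ⟨g, hg, rfl⟩
    have hmem : m ∈ Pd d := by
      intro x₁ x₂
      by_contra hcon
      push_neg at hcon
      have hεpos : 0 < (d x₁ x₂ - m x₁ - m x₂) / 2 := by linarith
      obtain ⟨v₁, hv₁mem, hv₁⟩ := Real.lt_sInf_add_pos (hne x₁) hεpos
      obtain ⟨v₂, hv₂mem, hv₂⟩ := Real.lt_sInf_add_pos (hne x₂) hεpos
      obtain ⟨g₁, hg₁, rfl⟩ := hv₁mem
      obtain ⟨g₂, hg₂, rfl⟩ := hv₂mem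
      rcases hchain.total hg₁ hg₂ with hle | hle
      · -- g₁ ≤ g₂ in the dual order, i.e. ofDual g₂ ≤ ofDual g₁ pointwise
        have h12 : OrderDual.ofDual g₂ ≤ OrderDual.ofDual g₁ := hle
        have hp := (hcS hg₂).1 x₁ x₂
        have h1 : OrderDual.ofDual g₂ x₁ ≤ OrderDual.ofDual g₁ x₁ := h12 x₁
        linarith
      · have h21 : OrderDual.ofDual g₁ ≤ OrderDual.ofDual g₂ := hle
        have hp := (hcS hg₁).1 x₁ x₂
        have h2 : OrderDual.ofDual g₁ x₂ ≤ OrderDual.ofDual g₂ x₂ := h21 x₂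
        linarith
    refine ⟨OrderDual.toDual m, ⟨hmem, ?_⟩, ?_⟩
    · intro x
      exact (hmle y hyc x).trans ((hcS hyc).2 x)
    · intro z hz
      exact fun x => hmle z hz x
  obtain ⟨m, hhm, hmax⟩ := zorn_le_nonempty₀ S key (OrderDual.toDual h) ⟨hh, le_rfl⟩
  refine ⟨OrderDual.ofDual m, ⟨hmax.1.1, ?_⟩, hmax.1.2⟩
  intro g hg hgle
  have hgS : OrderDual.toDual g ∈ S := ⟨hg, hgle.trans hmax.1.2⟩
  have hmg : m ≤ OrderDual.toDual g := fun x => hgle x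
  have hgm : OrderDual.toDual g ≤ m := hmax.2 hgS hmg
  exact le_antisymm hgle (fun x => hgm x)

/-- Tightness: a minimal element has near-witnesses at every point of positive value. -/
theorem td_tight {d : X → X → ℝ} (hd : IsDistance d) {f : X → ℝ} (hf : f ∈ Td d)
    {y : X} (hy : 0 < f y) {ε : ℝ} (hε : 0 < ε) : ∃ x, f y - ε < d x y - f x := by
  classical
  by_contra hcon
  push_neg at hcon
  set g : X → ℝ := Function.update f y (max (f y - ε) 0) with hg
  have hgy : g y = max (f y - ε) 0 := Function.update_self y _ f
  have hgne : ∀ a, a ≠ y → g a = f a := fun a ha => Function.update_of_ne ha _ f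
  have hgPd : g ∈ Pd d := by
    intro a b
    by_cases ha : a = y
    · by_cases hb : b = y
      · rw [ha, hb, hd.2.2, hgy]
        have := le_max_right (f y - ε) 0
        linarith
      · rw [ha, hgy, hgne b hb]
        have h1 : d b y - f b ≤ f y - ε := hcon b
        have h2 : d y b = d b y := hd.2.1 y b
        have := le_max_left (f y - ε) 0
        linarith
    · by_cases hb : b = y
      · rw [hb, hgy, hgne a ha]
        have h1 : d a y - f a ≤ f y - ε := hcon a
        have := le_max_left (f y - ε) 0
        linarith
      · rw [hgne a ha, hgne b hb]
        exact hf.1 a b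
  have hgle : g ≤ f := by
    intro a
    by_cases ha : a = y
    · rw [ha, hgy]
      exact max_le (by linarith) hy.le
    · rw [hgne a ha]
  have heq := hf.2 g hgPd hgle
  have : g y = f y := by rw [heq]
  rw [hgy] at this
  have hlt : max (f y - ε) 0 < f y := max_lt (by linarith) hy
  linarith [this, hlt]

theorem ofReal_sub_le_edist (a b : ℝ) : ENNReal.ofReal (a - b) ≤ edist a b := by
  rw [edist_dist, Real.dist_eq]
  exact ENNReal.ofReal_le_ofReal (le_abs_self _)

theorem term_le_dInfty {d : X → X → ℝ} {f g : X → ℝ} (hf : f ∈ Pd d) (x y : X) :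
    ENNReal.ofReal (d x y - f x - g y) ≤ dInfty f g := by
  have h1 : d x y - f x - g y ≤ f y - g y := by have := hf x y; linarith
  calc ENNReal.ofReal (d x y - f x - g y) ≤ ENNReal.ofReal (f y - g y) :=
        ENNReal.ofReal_le_ofReal h1
    _ ≤ edist (f y) (g y) := ofReal_sub_le_edist _ _
    _ ≤ dInfty f g := le_iSup (fun z => edist (f z) (g z)) y

theorem dInfty_comm (f g : X → ℝ) : dInfty f g = dInfty g f := by
  unfold dInfty
  exact iSup_congr fun y => edist_comm _ _

theorem dInfty_triangle (f g h : X → ℝ) : dInfty f h ≤ dInfty f g + dInfty g h := by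
  refine iSup_le fun y => ?_
  calc edist (f y) (h y) ≤ edist (f y) (g y) + edist (g y) (h y) := edist_triangle _ _ _
    _ ≤ dInfty f g + dInfty g h :=
        add_le_add (le_iSup (fun z => edist (f z) (g z)) y) (le_iSup (fun z => edist (g z) (h z)) y)

/-- The sup-distance between tight functions is bounded by the sup of defect terms. -/
theorem dInfty_le_iSup {d : X → X → ℝ} (hd : IsDistance d) {f g : X → ℝ}
    (hf : f ∈ Td d) (hg : g ∈ Td d) :
    dInfty f g ≤ ⨆ p : X × X, ENNReal.ofReal (d p.1 p.2 - f p.1 - g p.2) := by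
  refine iSup_le fun y => ?_
  rw [edist_dist, Real.dist_eq]
  rcases le_total (g y) (f y) with hcase | hcase
  · rw [abs_of_nonneg (by linarith)]
    by_cases h0 : f y - g y ≤ 0
    · rw [ENNReal.ofReal_of_nonpos h0]
      exact zero_le
    · push_neg at h0
      have hgy0 : 0 ≤ g y := pd_nonneg hd hg.1 y
      have hfy : 0 < f y := by linarith
      refine ENNReal.le_of_forall_pos_le_add fun ε hε _ => ?_
      have hεR : (0 : ℝ) < (ε : ℝ) := by exact_mod_cast hε
      obtain ⟨x, hx⟩ := td_tight hd hf hfy hεR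
      calc ENNReal.ofReal (f y - g y)
          ≤ ENNReal.ofReal ((d x y - f x - g y) + (ε : ℝ)) :=
            ENNReal.ofReal_le_ofReal (by linarith)
        _ ≤ ENNReal.ofReal (d x y - f x - g y) + ENNReal.ofReal (ε : ℝ) :=
            ENNReal.ofReal_add_le
        _ ≤ (⨆ p : X × X, ENNReal.ofReal (d p.1 p.2 - f p.1 - g p.2)) + (ε : ℝ≥0∞) := by
            refine add_le_add ?_ (le_of_eq ENNReal.ofReal_coe_nnreal)
            exact le_iSup (fun p : X × X => ENNReal.ofReal (d p.1 p.2 - f p.1 - g p.2)) (x, y)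
  · rw [abs_of_nonpos (by linarith)]
    by_cases h0 : g y - f y ≤ 0
    · rw [show -(f y - g y) = g y - f y by ring, ENNReal.ofReal_of_nonpos h0]
      exact zero_le
    · push_neg at h0
      have hfy0 : 0 ≤ f y := pd_nonneg hd hf.1 y
      have hgy : 0 < g y := by linarith
      refine ENNReal.le_of_forall_pos_le_add fun ε hε _ => ?_
      have hεR : (0 : ℝ) < (ε : ℝ) := by exact_mod_cast hε
      obtain ⟨x, hx⟩ := td_tight hd hg hgy hεR
      have hsym : d y x = d x y := hd.2.1 y x
      calc ENNReal.ofReal (-(f y - g y))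
          ≤ ENNReal.ofReal ((d y x - f y - g x) + (ε : ℝ)) :=
            ENNReal.ofReal_le_ofReal (by linarith)
        _ ≤ ENNReal.ofReal (d y x - f y - g x) + ENNReal.ofReal (ε : ℝ) :=
            ENNReal.ofReal_add_le
        _ ≤ (⨆ p : X × X, ENNReal.ofReal (d p.1 p.2 - f p.1 - g p.2)) + (ε : ℝ≥0∞) := by
            refine add_le_add ?_ (le_of_eq ENNReal.ofReal_coe_nnreal)
            exact le_iSup (fun p : X × X => ENNReal.ofReal (d p.1 p.2 - f p.1 - g p.2)) (y, x)

theorem ennreal_halve {u r : ℝ≥0∞} (h : u + u ≤ r + r) : u ≤ r := by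
  rw [← two_mul, ← two_mul] at h
  exact (ENNReal.mul_le_mul_iff_right two_ne_zero ENNReal.ofNat_ne_top).mp h

theorem ofReal_le_of_double {S : ℝ} {R : ℝ≥0∞}
    (h : ENNReal.ofReal (S + S) ≤ R + R) : ENNReal.ofReal S ≤ R := by
  rcases le_or_gt S 0 with hS | hS
  · rw [ENNReal.ofReal_of_nonpos hS]
    exact zero_le
  · refine ennreal_halve ?_
    rw [← ENNReal.ofReal_add hS.le hS.le]
    exact h

end Statement13Aux

/-- If `(X,d)` satisfies the extended four-point condition then `T_d` is
nonempty, all `d∞`-distances on `T_d` are finite, and `(T_d, d∞)` satisfies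
the classical four-point condition. -/
theorem statement13 {X : Type*} [Nonempty X] (d : X → X → ℝ)
    (hd : IsDistance d) (h4 : EFPC d) :
    (Td d).Nonempty ∧
    (∀ f ∈ Td d, ∀ g ∈ Td d, dInfty f g ≠ ⊤) ∧
    ∀ f₁ ∈ Td d, ∀ f₂ ∈ Td d, ∀ g₁ ∈ Td d, ∀ g₂ ∈ Td d,
      dInfty f₁ f₂ + dInfty g₁ g₂ ≤
        max (dInfty f₁ g₁ + dInfty f₂ g₂) (dInfty f₁ g₂ + dInfty f₂ g₁) := by
  classical
  -- `P_d` is nonempty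
  have hPdne : ∃ f₀, f₀ ∈ Pd d := by
    by_cases hex : ∃ p q, 0 < d p q
    · obtain ⟨p, q, hpq⟩ := hex
      refine ⟨fun x => max (d x p) (d x q), ?_⟩
      intro x y
      have h8 := h4 q x y p
      have sqp : d q p = d p q := hd.2.1 q p
      have sqx : d q x = d x q := hd.2.1 q x
      have sqy : d q y = d y q := hd.2.1 q y
      have spx : d p x = d x p := hd.2.1 p x
      have mxp : d x p ≤ max (d x p) (d x q) := le_max_left _ _
      have mxq : d x q ≤ max (d x p) (d x q) := le_max_right _ _
      have myp : d y p ≤ max (d y p) (d y q) := le_max_left _ _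
      have myq : d y q ≤ max (d y p) (d y q) := le_max_right _ _
      have nxp : 0 ≤ d x p := hd.1 x p
      have nyp : 0 ≤ d y p := hd.1 y p
      show d x y ≤ max (d x p) (d x q) + max (d y p) (d y q)
      rcases le_max_iff.mp h8 with h | h8
      · linarith
      rcases le_max_iff.mp h8 with h | h8
      · linarith
      rcases le_max_iff.mp h8 with h | h8
      · linarith
      rcases le_max_iff.mp h8 with h | h8
      · linarith
      rcases le_max_iff.mp h8 with h | h8
      · linarith
      rcases le_max_iff.mp h8 with h | h8
      · linarith
      rcases le_max_iff.mp h8 with h | h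
      · linarith
      · linarith
    · push_neg at hex
      exact ⟨fun _ => 0, fun x y => by simpa using hex x y⟩
  obtain ⟨f₀, hf₀⟩ := hPdne
  obtain ⟨fbase, hfbase, -⟩ := Statement13Aux.exists_td_le d hd hf₀
  -- Part 2 : finiteness
  have part2 : ∀ f ∈ Td d, ∀ g ∈ Td d, dInfty f g ≠ ⊤ := by
    intro f hf g hg
    by_cases hex : ∃ p q, 0 < d p q
    · obtain ⟨p, q, hpq⟩ := hex
      have hbound : ∀ x y : X, d x y - f x - g y ≤ f p + f q + g p + g q := by
        intro x y
        have h8 := h4 q x y p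
        have sqp : d q p = d p q := hd.2.1 q p
        have spx : d p x = d x p := hd.2.1 p x
        have bfqx : d q x ≤ f q + f x := hf.1 q x
        have bfxp : d x p ≤ f x + f p := hf.1 x p
        have bgyp : d y p ≤ g y + g p := hg.1 y p
        have bgyq : d y q ≤ g y + g q := hg.1 y q
        have bgqy : d q y ≤ g q + g y := hg.1 q y
        have bfxy : d x y ≤ f x + f y := hf.1 x y
        have nfp : 0 ≤ f p := Statement13Aux.pd_nonneg hd hf.1 p
        have nfq : 0 ≤ f q := Statement13Aux.pd_nonneg hd hf.1 q
        have ngp : 0 ≤ g p := Statement13Aux.pd_nonneg hd hg.1 p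
        have ngq : 0 ≤ g q := Statement13Aux.pd_nonneg hd hg.1 q
        have nfx : 0 ≤ f x := Statement13Aux.pd_nonneg hd hf.1 x
        have ngy : 0 ≤ g y := Statement13Aux.pd_nonneg hd hg.1 y
        rcases le_max_iff.mp h8 with h | h8
        · linarith
        rcases le_max_iff.mp h8 with h | h8
        · linarith
        rcases le_max_iff.mp h8 with h | h8
        · linarith
        rcases le_max_iff.mp h8 with h | h8
        · linarith
        rcases le_max_iff.mp h8 with h | h8
        · linarith
        rcases le_max_iff.mp h8 with h | h8
        · linarith
        rcases le_max_iff.mp h8 with h | h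
        · linarith
        · linarith
      have hle : dInfty f g ≤ ENNReal.ofReal (f p + f q + g p + g q) :=
        (Statement13Aux.dInfty_le_iSup hd hf hg).trans
          (iSup_le fun pr => ENNReal.ofReal_le_ofReal (hbound pr.1 pr.2))
      exact ne_top_of_le_ne_top ENNReal.ofReal_ne_top hle
    · push_neg at hex
      have h0Pd : (fun _ : X => (0 : ℝ)) ∈ Pd d := fun x y => by simpa using hex x y
      have hf0 : f = fun _ => 0 :=
        ((hf.2 _ h0Pd) fun x => Statement13Aux.pd_nonneg hd hf.1 x).symm
      have hg0 : g = fun _ => 0 :=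
        ((hg.2 _ h0Pd) fun x => Statement13Aux.pd_nonneg hd hg.1 x).symm
      rw [hf0, hg0]
      simp [dInfty]
  refine ⟨⟨fbase, hfbase⟩, part2, ?_⟩
  -- Part 3 : four-point condition
  intro f₁ hf₁ f₂ hf₂ g₁ hg₁ g₂ hg₂
  set a := dInfty f₁ g₁ with ha
  set b := dInfty f₂ g₂ with hb
  set c := dInfty f₁ g₂ with hc
  set e := dInfty f₂ g₁ with he
  have tri1 : dInfty f₁ f₂ ≤ a + e := by
    have := Statement13Aux.dInfty_triangle f₁ g₁ f₂
    rwa [Statement13Aux.dInfty_comm g₁ f₂] at this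
  have tri2 : dInfty f₁ f₂ ≤ c + b := by
    have := Statement13Aux.dInfty_triangle f₁ g₂ f₂
    rwa [Statement13Aux.dInfty_comm g₂ f₂] at this
  have tri3 : dInfty g₁ g₂ ≤ a + c := by
    have := Statement13Aux.dInfty_triangle g₁ f₁ g₂
    rwa [Statement13Aux.dInfty_comm g₁ f₁] at this
  have tri4 : dInfty g₁ g₂ ≤ e + b := by
    have := Statement13Aux.dInfty_triangle g₁ f₂ g₂
    rwa [Statement13Aux.dInfty_comm g₁ f₂] at this
  set R := max (a + b) (c + e) with hR
  have hD1R : dInfty f₁ f₂ ≤ R := by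
    rcases le_total e b with h | h
    · exact tri1.trans ((add_le_add_right h a).trans (le_max_left _ _))
    · exact tri2.trans ((add_le_add_right h c).trans (le_max_right _ _))
  have hD2R : dInfty g₁ g₂ ≤ R := by
    rcases le_total c b with h | h
    · exact tri3.trans ((add_le_add_right h a).trans (le_max_left _ _))
    · refine tri4.trans ((add_le_add_right h e).trans ?_)
      rw [add_comm e c]
      exact le_max_right _ _
  have key : ∀ pr : X × X, ∀ qr : X × X,
      ENNReal.ofReal (d pr.1 pr.2 - f₁ pr.1 - f₂ pr.2)
        + ENNReal.ofReal (d qr.1 qr.2 - g₁ qr.1 - g₂ qr.2) ≤ R := by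
    rintro ⟨x, y⟩ ⟨z, w⟩
    dsimp only
    have nf1x : 0 ≤ f₁ x := Statement13Aux.pd_nonneg hd hf₁.1 x
    have nf2y : 0 ≤ f₂ y := Statement13Aux.pd_nonneg hd hf₂.1 y
    have ng1z : 0 ≤ g₁ z := Statement13Aux.pd_nonneg hd hg₁.1 z
    have ng2w : 0 ≤ g₂ w := Statement13Aux.pd_nonneg hd hg₂.1 w
    by_cases hT1 : d x y - f₁ x - f₂ y ≤ 0
    · rw [ENNReal.ofReal_of_nonpos hT1, zero_add]
      exact (Statement13Aux.term_le_dInfty hg₁.1 z w).trans hD2R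
    by_cases hT2 : d z w - g₁ z - g₂ w ≤ 0
    · rw [ENNReal.ofReal_of_nonpos hT2, add_zero]
      exact (Statement13Aux.term_le_dInfty hf₁.1 x y).trans hD1R
    push_neg at hT1 hT2
    rw [← ENNReal.ofReal_add hT1.le hT2.le]
    have h8 := h4 w x y z
    have swx : d w x = d x w := hd.2.1 w x
    have swz : d w z = d z w := hd.2.1 w z
    have swy : d w y = d y w := hd.2.1 w y
    have szx : d z x = d x z := hd.2.1 z x
    rcases le_max_iff.mp h8 with h | h8
    · exact ((by linarith : ¬(0 < d z w - g₁ z - g₂ w)) hT2).elim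
    rcases le_max_iff.mp h8 with h | h8
    · exact ((by linarith : ¬(0 < d x y - f₁ x - f₂ y)) hT1).elim
    rcases le_max_iff.mp h8 with h | h8
    · calc ENNReal.ofReal ((d x y - f₁ x - f₂ y) + (d z w - g₁ z - g₂ w))
          ≤ ENNReal.ofReal ((d x w - f₁ x - g₂ w) + (d y z - f₂ y - g₁ z)) :=
            ENNReal.ofReal_le_ofReal (by linarith)
        _ ≤ ENNReal.ofReal (d x w - f₁ x - g₂ w) + ENNReal.ofReal (d y z - f₂ y - g₁ z) :=
            ENNReal.ofReal_add_le
        _ ≤ c + e := add_le_add (Statement13Aux.term_le_dInfty hf₁.1 x w)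
            (Statement13Aux.term_le_dInfty hf₂.1 y z)
        _ ≤ R := le_max_right _ _
    rcases le_max_iff.mp h8 with h | h8
    · calc ENNReal.ofReal ((d x y - f₁ x - f₂ y) + (d z w - g₁ z - g₂ w))
          ≤ ENNReal.ofReal ((d x z - f₁ x - g₁ z) + (d y w - f₂ y - g₂ w)) :=
            ENNReal.ofReal_le_ofReal (by linarith)
        _ ≤ ENNReal.ofReal (d x z - f₁ x - g₁ z) + ENNReal.ofReal (d y w - f₂ y - g₂ w) :=
            ENNReal.ofReal_add_le
        _ ≤ a + b := add_le_add (Statement13Aux.term_le_dInfty hf₁.1 x z)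
            (Statement13Aux.term_le_dInfty hf₂.1 y w)
        _ ≤ R := le_max_left _ _
    rcases le_max_iff.mp h8 with h | h8
    · -- half-perimeter on x, y, z
      refine Statement13Aux.ofReal_le_of_double ?_
      calc ENNReal.ofReal (((d x y - f₁ x - f₂ y) + (d z w - g₁ z - g₂ w))
              + ((d x y - f₁ x - f₂ y) + (d z w - g₁ z - g₂ w)))
          ≤ ENNReal.ofReal ((d x y - f₁ x - f₂ y)
              + ((d y z - f₂ y - g₁ z) + (d x z - f₁ x - g₁ z))) :=
            ENNReal.ofReal_le_ofReal (by linarith)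
        _ ≤ ENNReal.ofReal (d x y - f₁ x - f₂ y)
              + ENNReal.ofReal ((d y z - f₂ y - g₁ z) + (d x z - f₁ x - g₁ z)) :=
            ENNReal.ofReal_add_le
        _ ≤ ENNReal.ofReal (d x y - f₁ x - f₂ y)
              + (ENNReal.ofReal (d y z - f₂ y - g₁ z) + ENNReal.ofReal (d x z - f₁ x - g₁ z)) :=
            add_le_add_right ENNReal.ofReal_add_le _
        _ ≤ dInfty f₁ f₂ + (e + a) := add_le_add (Statement13Aux.term_le_dInfty hf₁.1 x y)
            (add_le_add (Statement13Aux.term_le_dInfty hf₂.1 y z)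
              (Statement13Aux.term_le_dInfty hf₁.1 x z))
        _ ≤ (c + b) + (e + a) := add_le_add_left tri2 _
        _ = (a + b) + (c + e) := by ring
        _ ≤ R + R := add_le_add (le_max_left _ _) (le_max_right _ _)
    rcases le_max_iff.mp h8 with h | h8
    · -- half-perimeter on x, y, w
      refine Statement13Aux.ofReal_le_of_double ?_
      calc ENNReal.ofReal (((d x y - f₁ x - f₂ y) + (d z w - g₁ z - g₂ w))
              + ((d x y - f₁ x - f₂ y) + (d z w - g₁ z - g₂ w)))
          ≤ ENNReal.ofReal ((d x y - f₁ x - f₂ y)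
              + ((d y w - f₂ y - g₂ w) + (d x w - f₁ x - g₂ w))) :=
            ENNReal.ofReal_le_ofReal (by linarith)
        _ ≤ ENNReal.ofReal (d x y - f₁ x - f₂ y)
              + ENNReal.ofReal ((d y w - f₂ y - g₂ w) + (d x w - f₁ x - g₂ w)) :=
            ENNReal.ofReal_add_le
        _ ≤ ENNReal.ofReal (d x y - f₁ x - f₂ y)
              + (ENNReal.ofReal (d y w - f₂ y - g₂ w) + ENNReal.ofReal (d x w - f₁ x - g₂ w)) :=
            add_le_add_right ENNReal.ofReal_add_le _
        _ ≤ dInfty f₁ f₂ + (b + c) := add_le_add (Statement13Aux.term_le_dInfty hf₁.1 x y)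
            (add_le_add (Statement13Aux.term_le_dInfty hf₂.1 y w)
              (Statement13Aux.term_le_dInfty hf₁.1 x w))
        _ ≤ (a + e) + (b + c) := add_le_add_left tri1 _
        _ = (a + b) + (c + e) := by ring
        _ ≤ R + R := add_le_add (le_max_left _ _) (le_max_right _ _)
    rcases le_max_iff.mp h8 with h | h
    · -- half-perimeter on x, z, w
      refine Statement13Aux.ofReal_le_of_double ?_
      calc ENNReal.ofReal (((d x y - f₁ x - f₂ y) + (d z w - g₁ z - g₂ w))
              + ((d x y - f₁ x - f₂ y) + (d z w - g₁ z - g₂ w)))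
          ≤ ENNReal.ofReal ((d z w - g₁ z - g₂ w)
              + ((d x z - f₁ x - g₁ z) + (d x w - f₁ x - g₂ w))) :=
            ENNReal.ofReal_le_ofReal (by linarith)
        _ ≤ ENNReal.ofReal (d z w - g₁ z - g₂ w)
              + ENNReal.ofReal ((d x z - f₁ x - g₁ z) + (d x w - f₁ x - g₂ w)) :=
            ENNReal.ofReal_add_le
        _ ≤ ENNReal.ofReal (d z w - g₁ z - g₂ w)
              + (ENNReal.ofReal (d x z - f₁ x - g₁ z) + ENNReal.ofReal (d x w - f₁ x - g₂ w)) :=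
            add_le_add_right ENNReal.ofReal_add_le _
        _ ≤ dInfty g₁ g₂ + (a + c) := add_le_add (Statement13Aux.term_le_dInfty hg₁.1 z w)
            (add_le_add (Statement13Aux.term_le_dInfty hf₁.1 x z)
              (Statement13Aux.term_le_dInfty hf₁.1 x w))
        _ ≤ (e + b) + (a + c) := add_le_add_left tri4 _
        _ = (a + b) + (c + e) := by ring
        _ ≤ R + R := add_le_add (le_max_left _ _) (le_max_right _ _)
    · -- half-perimeter on y, z, w
      refine Statement13Aux.ofReal_le_of_double ?_
      calc ENNReal.ofReal (((d x y - f₁ x - f₂ y) + (d z w - g₁ z - g₂ w))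
              + ((d x y - f₁ x - f₂ y) + (d z w - g₁ z - g₂ w)))
          ≤ ENNReal.ofReal ((d z w - g₁ z - g₂ w)
              + ((d y z - f₂ y - g₁ z) + (d y w - f₂ y - g₂ w))) :=
            ENNReal.ofReal_le_ofReal (by linarith)
        _ ≤ ENNReal.ofReal (d z w - g₁ z - g₂ w)
              + ENNReal.ofReal ((d y z - f₂ y - g₁ z) + (d y w - f₂ y - g₂ w)) :=
            ENNReal.ofReal_add_le
        _ ≤ ENNReal.ofReal (d z w - g₁ z - g₂ w)
              + (ENNReal.ofReal (d y z - f₂ y - g₁ z) + ENNReal.ofReal (d y w - f₂ y - g₂ w)) :=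
            add_le_add_right ENNReal.ofReal_add_le _
        _ ≤ dInfty g₁ g₂ + (e + b) := add_le_add (Statement13Aux.term_le_dInfty hg₁.1 z w)
            (add_le_add (Statement13Aux.term_le_dInfty hf₂.1 y z)
              (Statement13Aux.term_le_dInfty hf₂.1 y w))
        _ ≤ (a + c) + (e + b) := add_le_add_left tri3 _
        _ = (a + b) + (c + e) := by ring
        _ ≤ R + R := add_le_add (le_max_left _ _) (le_max_right _ _)
  calc dInfty f₁ f₂ + dInfty g₁ g₂
      ≤ (⨆ p : X × X, ENNReal.ofReal (d p.1 p.2 - f₁ p.1 - f₂ p.2))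
        + (⨆ q : X × X, ENNReal.ofReal (d q.1 q.2 - g₁ q.1 - g₂ q.2)) :=
        add_le_add (Statement13Aux.dInfty_le_iSup hd hf₁ hf₂)
          (Statement13Aux.dInfty_le_iSup hd hg₁ hg₂)
    _ ≤ R := ENNReal.iSup_add_iSup_le key
end
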